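/- Let Ω be a properly convex domain and g ∈ Aut(Ω) with τ_Ω(g) > 0, with attracting fixed point a and repelling fixed point b in the closure of Ω. If c is a fixed point of g in the closure of Ω that is neither attracting nor repelling, then [a,c] ∪ [b,c] ⊂ ∂Ω. -/

import Mathlib

open Set Filter

abbrev Vd (d : ℕ) := Fin (d + 1) → ℝ

/-- A properly convex domain `Ω ⊆ P(ℝ^{d+1})`, described by its open convex cone of lifts:
an open convex cone `C` whose closure contains no line through the origin. Points of the
closure of `Ω` are represented by nonzero vectors of the closure of `C`, and two vectors
represent the same point iff they lie on the same ray. -/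
def IsProperConvexCone {d : ℕ} (C : Set (Vd d)) : Prop :=
  IsOpen C ∧ Convex ℝ C ∧ C.Nonempty ∧
    (∀ x ∈ C, ∀ t : ℝ, 0 < t → t • x ∈ C) ∧
    (closure C ∩ (-(closure C)) ⊆ {0})

/-- Lifts of the projective segment `[x,y]` between the points represented by `x` and `y`. -/
def segCone {d : ℕ} (x y : Vd d) : Set (Vd d) :=
  {v | ∃ s t : ℝ, 0 ≤ s ∧ 0 ≤ t ∧ 0 < s + t ∧ v = s • x + t • y}

/-- Lifts of the open projective segment `(x,y)`. -/
def openSegCone {d : ℕ} (x y : Vd d) : Set (Vd d) :=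
  {v | ∃ s t : ℝ, 0 < s ∧ 0 < t ∧ v = s • x + t • y}

/-- The Hilbert metric on `Ω`, computed on cone lifts:
`d([x],[y]) = log ( M(x/y) · M(y/x) )` where `M(x/y) = inf { t > 0 | t • y - x ∈ closure C }`.
This agrees with the cross-ratio definition of the Hilbert metric and is invariant under
rescaling of the lifts. -/
noncomputable def coneDist {d : ℕ} (C : Set (Vd d)) (x y : Vd d) : ℝ :=
  Real.log (sInf {t : ℝ | 0 < t ∧ t • y - x ∈ closure C} *
    sInf {t : ℝ | 0 < t ∧ t • x - y ∈ closure C})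

/-- `A ∈ GL(d+1, ℝ)` induces an automorphism of `Ω` iff its linear action preserves the cone. -/
def PreservesCone {d : ℕ} (C : Set (Vd d)) (A : Matrix (Fin (d + 1)) (Fin (d + 1)) ℝ) : Prop :=
  A.mulVec '' C = C

/-- The translation length `τ_Ω(g) = inf_{x ∈ Ω} d_Ω(x, g x)`. -/
noncomputable def translationLength {d : ℕ} (C : Set (Vd d))
    (A : Matrix (Fin (d + 1)) (Fin (d + 1)) ℝ) : ℝ :=
  sInf ((fun x => coneDist C x (A.mulVec x)) '' C)

/-- `λ_max`: the largest modulus of a (complex) eigenvalue of `A`. -/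
noncomputable def specMax {d : ℕ} (A : Matrix (Fin (d + 1)) (Fin (d + 1)) ℝ) : ℝ :=
  sSup ((fun z : ℂ => ‖z‖) '' spectrum ℂ (A.map Complex.ofReal))

/-- `λ_min`: the smallest modulus of a (complex) eigenvalue of `A`. -/
noncomputable def specMin {d : ℕ} (A : Matrix (Fin (d + 1)) (Fin (d + 1)) ℝ) : ℝ :=
  sInf ((fun z : ℂ => ‖z‖) '' spectrum ℂ (A.map Complex.ofReal))

/-- Three pairwise distinct boundary points `x, y, z` form a half triangle if
`[x,z] ∪ [y,z] ⊆ ∂Ω` and `(x,y) ⊆ Ω`. -/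
def IsHalfTriangle {d : ℕ} (C : Set (Vd d)) (x y z : Vd d) : Prop :=
  segCone x z ⊆ frontier C ∧ segCone y z ⊆ frontier C ∧ openSegCone x y ⊆ C

/-- The bi-infinite projective line `(x,y)` is contained in a half triangle in `∂Ω`. -/
def InHalfTriangle {d : ℕ} (C : Set (Vd d)) (x y : Vd d) : Prop :=
  ∃ z ∈ frontier C, z ≠ 0 ∧ ¬ SameRay ℝ z x ∧ ¬ SameRay ℝ z y ∧ IsHalfTriangle C x y z

/-- `(x,y)` is an axis of the automorphism induced by `A`: an invariant bi-infinite
projective line that intersects `Ω`. -/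
def IsAxis {d : ℕ} (C : Set (Vd d)) (A : Matrix (Fin (d + 1)) (Fin (d + 1)) ℝ)
    (x y : Vd d) : Prop :=
  x ∈ frontier C ∧ y ∈ frontier C ∧ x ≠ 0 ∧ y ≠ 0 ∧ ¬ SameRay ℝ x y ∧
    openSegCone x y ⊆ C ∧ A.mulVec '' segCone x y = segCone x y

/-- A rank-one isometry: positive translation length, existence of an axis, and no axis
contained in a half triangle in `∂Ω`. -/
def IsRankOne {d : ℕ} (C : Set (Vd d)) (A : Matrix (Fin (d + 1)) (Fin (d + 1)) ℝ) : Prop :=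
  0 < translationLength C A ∧ (∃ x y, IsAxis C A x y) ∧
    ∀ x y, IsAxis C A x y → ¬ InHalfTriangle C x y

open Topology

-- closure of C is closed under positive smul
lemma closure_smul_mem {d : ℕ} {C : Set (Vd d)}
    (hscale : ∀ x ∈ C, ∀ t : ℝ, 0 < t → t • x ∈ C)
    {x : Vd d} (hx : x ∈ closure C) {t : ℝ} (ht : 0 < t) : t • x ∈ closure C :=
  map_mem_closure (continuous_const_smul t) hx (fun y hy => hscale y hy t ht)

lemma closure_zero_mem {d : ℕ} {C : Set (Vd d)} (hne : C.Nonempty)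
    (hscale : ∀ x ∈ C, ∀ t : ℝ, 0 < t → t • x ∈ C) : (0 : Vd d) ∈ closure C := by
  obtain ⟨x₀, hx₀⟩ := hne
  have h1 : Tendsto (fun n : ℕ => (1 / (n + 1) : ℝ) • x₀) atTop (𝓝 ((0 : ℝ) • x₀)) :=
    (tendsto_one_div_add_atTop_nhds_zero_nat).smul_const x₀
  rw [zero_smul] at h1
  exact mem_closure_of_tendsto h1 (Eventually.of_forall fun n =>
    hscale x₀ hx₀ _ (by positivity))

lemma closure_smul_mem' {d : ℕ} {C : Set (Vd d)} (hne : C.Nonempty)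
    (hscale : ∀ x ∈ C, ∀ t : ℝ, 0 < t → t • x ∈ C)
    {x : Vd d} (hx : x ∈ closure C) {t : ℝ} (ht : 0 ≤ t) : t • x ∈ closure C := by
  rcases ht.lt_or_eq with h | h
  · exact closure_smul_mem hscale hx h
  · rw [← h, zero_smul]; exact closure_zero_mem hne hscale

lemma closure_add_mem {d : ℕ} {C : Set (Vd d)} (hconv : Convex ℝ C)
    (hscale : ∀ x ∈ C, ∀ t : ℝ, 0 < t → t • x ∈ C)
    {x y : Vd d} (hx : x ∈ closure C) (hy : y ∈ closure C) : x + y ∈ closure C := by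
  have hmid : (1/2 : ℝ) • x + (1/2 : ℝ) • y ∈ closure C :=
    hconv.closure hx hy (by norm_num) (by norm_num) (by norm_num)
  have h2 : (2 : ℝ) • ((1/2 : ℝ) • x + (1/2 : ℝ) • y) ∈ closure C :=
    closure_smul_mem hscale hmid (by norm_num)
  rw [smul_add, smul_smul, smul_smul] at h2
  norm_num at h2
  exact h2

lemma seg_subset_frontier {d : ℕ} {C : Set (Vd d)} (hC : IsProperConvexCone C)
    (M : Matrix (Fin (d + 1)) (Fin (d + 1)) ℝ) (hM : ∀ x ∈ C, M.mulVec x ∈ C)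
    {p q r : Vd d} (hp : p ∈ closure C) (hq : q ∈ closure C) (hr : r ∈ closure C)
    (hr0 : r ≠ 0) {α β γ : ℝ} (hα : 0 < α) (hβ : 0 < β) (hγ : 0 < γ)
    (hαγ : α < γ) (hβγ : β < γ)
    (hMp : M.mulVec p = α • p) (hMq : M.mulVec q = β • q) (hMr : M.mulVec r = γ • r) :
    segCone p q ⊆ frontier C := by
  obtain ⟨hopen, hconv, hne, hscale, hproper⟩ := hC
  rintro v ⟨s, t, hs, ht, hst, rfl⟩
  have hvcl : s • p + t • q ∈ closure C :=
    closure_add_mem hconv hscale (closure_smul_mem' hne hscale hp hs)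
      (closure_smul_mem' hne hscale hq ht)
  rw [hopen.frontier_eq, Set.mem_diff]
  refine ⟨hvcl, fun hvC => ?_⟩
  -- find ε > 0 with v - ε • r ∈ C
  have htd : Tendsto (fun ε : ℝ => (s • p + t • q) - ε • r) (𝓝 0)
      (𝓝 (s • p + t • q)) := by
    have : Tendsto (fun ε : ℝ => (s • p + t • q) - ε • r) (𝓝 0)
        (𝓝 ((s • p + t • q) - (0 : ℝ) • r)) :=
      tendsto_const_nhds.sub ((continuous_id.smul continuous_const).tendsto 0)
    simpa using this
  have hev : ∀ᶠ ε in 𝓝[>] (0:ℝ), (s • p + t • q) - ε • r ∈ C :=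
    (htd.eventually (hopen.eventually_mem hvC)).filter_mono nhdsWithin_le_nhds
  obtain ⟨ε, hεC, hεpos⟩ := (hev.and (eventually_mem_nhdsWithin)).exists
  rw [Set.mem_Ioi] at hεpos
  -- the iterated sequence
  set w : ℕ → Vd d := fun n => (s * α ^ n) • p + (t * β ^ n) • q - (ε * γ ^ n) • r with hw
  have hwC : ∀ n, w n ∈ C := by
    intro n
    induction n with
    | zero => simpa [hw] using hεC
    | succ n ih =>
      have h1 : M.mulVec (w n) = w (n + 1) := by
        simp only [hw, Matrix.mulVec_sub, Matrix.mulVec_add, Matrix.mulVec_smul,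
          hMp, hMq, hMr, smul_smul]
        congr 2 <;> ring_nf
      have h2 := hM _ ih
      rwa [h1] at h2
  have huC : ∀ n, (γ ^ n)⁻¹ • w n ∈ C := fun n =>
    hscale _ (hwC n) _ (by positivity)
  have hueq : ∀ n, (γ ^ n)⁻¹ • w n
      = ((α / γ) ^ n * s) • p + ((β / γ) ^ n * t) • q - ε • r := by
    intro n
    have hγn : (γ : ℝ) ^ n ≠ 0 := by positivity
    simp only [hw, smul_sub, smul_add, smul_smul, div_pow]
    congr 2 <;> field_simp <;> ring_nf
  have hlim : Tendsto (fun n => ((α / γ) ^ n * s) • p + ((β / γ) ^ n * t) • q - ε • r)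
      atTop (𝓝 (-(ε • r))) := by
    have h1 : Tendsto (fun n : ℕ => (α / γ) ^ n) atTop (𝓝 0) :=
      tendsto_pow_atTop_nhds_zero_of_lt_one (by positivity) ((div_lt_one hγ).mpr hαγ)
    have h2 : Tendsto (fun n : ℕ => (β / γ) ^ n) atTop (𝓝 0) :=
      tendsto_pow_atTop_nhds_zero_of_lt_one (by positivity) ((div_lt_one hγ).mpr hβγ)
    have h3 : Tendsto (fun n => ((α / γ) ^ n * s) • p + ((β / γ) ^ n * t) • q - ε • r)
        atTop (𝓝 (((0 : ℝ) * s) • p + ((0 : ℝ) * t) • q - ε • r)) :=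
      (((h1.mul_const s).smul_const p).add ((h2.mul_const t).smul_const q)).sub
        tendsto_const_nhds
    simpa using h3
  have hneg : -(ε • r) ∈ closure C := by
    refine mem_closure_of_tendsto hlim (Eventually.of_forall fun n => ?_)
    rw [← hueq n]; exact huC n
  have hpos : ε • r ∈ closure C := closure_smul_mem hscale hr hεpos
  have : -(ε • r) ∈ closure C ∩ (-(closure C)) := ⟨hneg, by simpa using hpos⟩
  have h0 : -(ε • r) = 0 := hproper this
  apply hr0
  have : ε • r = 0 := by simpa using h0
  simpa [hεpos.ne'] using (smul_eq_zero.mp this)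

/-- An eigenvalue whose eigenvector lies in the closure of the cone is positive. -/
lemma eig_pos {d : ℕ} {C : Set (Vd d)} (hC : IsProperConvexCone C)
    {A : Matrix (Fin (d + 1)) (Fin (d + 1)) ℝ} (hA : IsUnit A)
    (hM : ∀ x ∈ C, A.mulVec x ∈ C)
    {w : Vd d} (hw : w ∈ closure C) (hw0 : w ≠ 0) {ν : ℝ}
    (hν : A.mulVec w = ν • w) : 0 < ν := by
  obtain ⟨hopen, hconv, hne, hscale, hproper⟩ := hC
  have hdet : IsUnit A.det := (Matrix.isUnit_iff_isUnit_det A).mp hA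
  have hν0 : ν ≠ 0 := by
    rintro rfl
    rw [zero_smul] at hν
    have : A.det = 0 := Matrix.exists_mulVec_eq_zero_iff.mp ⟨w, hw0, hν⟩
    exact hdet.ne_zero this
  rcases lt_trichotomy ν 0 with hlt | heq | hgt
  · -- ν • w ∈ closure C via continuity of mulVec
    have hcont : Continuous fun x : Vd d => A.mulVec x := by
      have := (Matrix.mulVecLin A).continuous_of_finiteDimensional
      exact Continuous.matrix_mulVec continuous_const continuous_id
    have h1 : ν • w ∈ closure C := by
      rw [← hν]
      exact map_mem_closure hcont hw hM
    have h2 : (-ν) • w ∈ closure C := closure_smul_mem hscale hw (by linarith)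
    have h3 : ν • w ∈ closure C ∩ (-(closure C)) := ⟨h1, by simpa using h2⟩
    have := hproper h3
    simp only [Set.mem_singleton_iff, smul_eq_zero] at this
    rcases this with h | h
    · exact absurd h hν0
    · exact absurd h hw0
  · exact absurd heq hν0
  · exact hgt

/-- A real eigenvalue has modulus between `specMin` and `specMax`. -/
lemma specMin_le_and_le_specMax {d : ℕ} (A : Matrix (Fin (d + 1)) (Fin (d + 1)) ℝ)
    {w : Vd d} (hw0 : w ≠ 0) {ν : ℝ} (hν : A.mulVec w = ν • w) :
    specMin A ≤ |ν| ∧ |ν| ≤ specMax A := by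
  set M' := A.map Complex.ofReal with hM'
  have hspec : (ν : ℂ) ∈ spectrum ℂ M' := by
    rw [spectrum.mem_iff]
    intro hunit
    have hdet : ((algebraMap ℂ (Matrix (Fin (d + 1)) (Fin (d + 1)) ℂ) ν) - M').det ≠ 0 :=
      ((Matrix.isUnit_iff_isUnit_det _).mp hunit).ne_zero
    apply hdet
    rw [← Matrix.exists_mulVec_eq_zero_iff]
    refine ⟨fun i => (w i : ℂ), ?_, ?_⟩
    · intro h
      apply hw0
      funext i
      have h2 := congr_fun h i
      simp only [Pi.zero_apply, Complex.ofReal_eq_zero] at h2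
      simpa using h2
    · have hmv : M'.mulVec (fun i => (w i : ℂ)) = (ν : ℂ) • fun i => (w i : ℂ) := by
        funext i
        have h1 := (RingHom.map_mulVec Complex.ofRealHom A w i).symm
        have h2 : (A.mulVec w) i = ν * w i := by rw [hν]; simp
        calc (M'.mulVec fun i => (w i : ℂ)) i
            = ((A.map Complex.ofRealHom).mulVec (Complex.ofRealHom ∘ w)) i := rfl
          _ = Complex.ofRealHom ((A.mulVec w) i) := h1
          _ = ((ν : ℂ) • fun i => (w i : ℂ)) i := by rw [h2]; simp
      rw [Matrix.sub_mulVec, Algebra.algebraMap_eq_smul_one, Matrix.smul_mulVec,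
        Matrix.one_mulVec, hmv, sub_self]
  have hmem : |ν| ∈ (fun z : ℂ => ‖z‖) '' spectrum ℂ M' :=
    ⟨(ν : ℂ), hspec, by simp⟩
  constructor
  · exact csInf_le ⟨0, fun y ⟨z, _, hz⟩ => hz ▸ norm_nonneg z⟩ hmem
  · exact le_csSup (((Matrix.finite_spectrum M').image (fun z : ℂ => ‖z‖)).bddAbove) hmem


/-- If `g` has positive translation length with attracting fixed point `a` and repelling
fixed point `b`, and `c` is a fixed point of `g` that is neither attracting nor repelling,
then `[a,c] ∪ [b,c] ⊆ ∂Ω`. -/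
theorem segments_to_neutral_fixed_point_in_boundary {d : ℕ} (C : Set (Vd d))
    (hC : IsProperConvexCone C)
    (A : Matrix (Fin (d + 1)) (Fin (d + 1)) ℝ) (hA : IsUnit A)
    (hpres : PreservesCone C A) (hτ : 0 < translationLength C A)
    (a b c : Vd d)
    (haC : a ∈ closure C) (hbC : b ∈ closure C) (hcC : c ∈ closure C)
    (ha0 : a ≠ 0) (hb0 : b ≠ 0) (hc0 : c ≠ 0)
    (hatt : A.mulVec a = specMax A • a) (hrep : A.mulVec b = specMin A • b)
    (μ : ℝ) (hfix : A.mulVec c = μ • c) (hμmax : μ ≠ specMax A) (hμmin : μ ≠ specMin A) :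
    segCone a c ⊆ frontier C ∧ segCone b c ⊆ frontier C := by
  set lam := specMax A with hlam
  set m := specMin A with hm
  have hforward : ∀ x ∈ C, A.mulVec x ∈ C := fun x hx =>
    hpres ▸ Set.mem_image_of_mem _ hx
  have hdet : IsUnit A.det := (Matrix.isUnit_iff_isUnit_det A).mp hA
  have hAinvA : A⁻¹ * A = 1 := Matrix.nonsing_inv_mul A hdet
  have hback : ∀ x ∈ C, A⁻¹.mulVec x ∈ C := by
    intro x hx
    rw [← hpres] at hx
    obtain ⟨y, hy, rfl⟩ := hx
    rwa [Matrix.mulVec_mulVec, hAinvA, Matrix.one_mulVec]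
  -- positivity of the three eigenvalues
  have hlampos : 0 < lam := eig_pos hC hA hforward haC ha0 hatt
  have hmpos : 0 < m := eig_pos hC hA hforward hbC hb0 hrep
  have hμpos : 0 < μ := eig_pos hC hA hforward hcC hc0 hfix
  -- ordering: m < μ < lam
  have hbounds := specMin_le_and_le_specMax A hc0 hfix
  rw [abs_of_pos hμpos] at hbounds
  have hmμ : m < μ := lt_of_le_of_ne hbounds.1 (Ne.symm hμmin)
  have hμlam : μ < lam := lt_of_le_of_ne hbounds.2 hμmax
  have hmlam : m < lam := hmμ.trans hμlam
  -- eigen equations for A⁻¹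
  have hinv : ∀ (w : Vd d) (ν : ℝ), ν ≠ 0 → A.mulVec w = ν • w →
      A⁻¹.mulVec w = ν⁻¹ • w := by
    intro w ν hν hw
    have h1 : A⁻¹.mulVec (A.mulVec w) = w := by
      rw [Matrix.mulVec_mulVec, hAinvA, Matrix.one_mulVec]
    rw [hw, Matrix.mulVec_smul] at h1
    calc A⁻¹.mulVec w = ν⁻¹ • (ν • A⁻¹.mulVec w) := by
          rw [smul_smul, inv_mul_cancel₀ hν, one_smul]
      _ = ν⁻¹ • w := by rw [h1]
  have hinva : A⁻¹.mulVec a = lam⁻¹ • a := hinv a lam hlampos.ne' hatt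
  have hinvb : A⁻¹.mulVec b = m⁻¹ • b := hinv b m hmpos.ne' hrep
  have hinvc : A⁻¹.mulVec c = μ⁻¹ • c := hinv c μ hμpos.ne' hfix
  constructor
  · exact seg_subset_frontier hC A⁻¹ hback haC hcC hbC hb0
      (inv_pos.mpr hlampos) (inv_pos.mpr hμpos) (inv_pos.mpr hmpos)
      ((inv_lt_inv₀ hlampos hmpos).mpr hmlam) ((inv_lt_inv₀ hμpos hmpos).mpr hmμ)
      hinva hinvc hinvb
  · exact seg_subset_frontier hC A hforward hbC hcC haC ha0
      hmpos hμpos hlampos hmlam hμlam hrep hfix hatt
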